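/- Let σ ∈ C(ℝ) and n ≥ 1. The linear span of the ridge functions x ↦ σ(⟨a, x⟩ + b), over all a ∈ ℝⁿ and b ∈ ℝ, is dense in C(ℝⁿ) in the topology of uniform convergence on compact subsets if and only if σ is not a polynomial. -/

import Mathlib

open Filter Topology Polynomial

variable {Y : Type*} [TopologicalSpace Y]

/-- Membership in closure of a set of continuous maps via uniform approximation on compacts. -/
lemma memClosure_of_approx {A : Set C(Y, ℝ)} {F : C(Y, ℝ)}
    (h : ∀ K : Set Y, IsCompact K → ∀ ε : ℝ, 0 < ε → ∃ G ∈ A, ∀ x ∈ K, |F x - G x| ≤ ε) :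
    F ∈ closure A := by
  have hb := nhds_basis_uniformity' (x := F) ContinuousMap.hasBasis_compactConvergenceUniformity
  rw [mem_closure_iff_nhds_basis hb]
  rintro ⟨K, V⟩ ⟨hK, hV⟩
  rcases Metric.mem_uniformity_dist.1 hV with ⟨ε, hε, hεV⟩
  rcases h K hK (ε / 2) (by linarith) with ⟨G, hGA, hG⟩
  exact ⟨G, hGA, fun x hx => hεV (by simpa [Real.dist_eq] using lt_of_le_of_lt (hG x hx) (by linarith))⟩
open Filter Topology Polynomial
open scoped fwdDiff

section Main
variable {E : Type*} [NormedAddCommGroup E] [InnerProductSpace ℝ E]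

noncomputable def ridgeCM (τ : ℝ → ℝ) (hτ : Continuous τ) (a : E) (b : ℝ) : C(E, ℝ) :=
  ⟨fun x => τ ((inner ℝ a x : ℝ) + b),
    hτ.comp ((continuous_const.inner continuous_id).add continuous_const)⟩

@[simp] lemma ridgeCM_apply (τ : ℝ → ℝ) (hτ : Continuous τ) (a : E) (b : ℝ) (x : E) :
    ridgeCM τ hτ a b x = τ ((inner ℝ a x : ℝ) + b) := rfl

noncomputable def powCM (a : E) (k : ℕ) (c : ℝ) : C(E, ℝ) :=
  ⟨fun x => (inner ℝ a x : ℝ) ^ k * c,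
    ((continuous_const.inner continuous_id).pow k).mul continuous_const⟩

@[simp] lemma powCM_apply (a : E) (k : ℕ) (c : ℝ) (x : E) :
    powCM a k c x = (inner ℝ a x : ℝ) ^ k * c := rfl

noncomputable def expCM (a : E) : C(E, ℝ) :=
  ⟨fun x => Real.exp ((inner ℝ a x : ℝ)),
    Real.continuous_exp.comp (continuous_const.inner continuous_id)⟩

@[simp] lemma expCM_apply (a : E) (x : E) : expCM a x = Real.exp ((inner ℝ a x : ℝ)) := rfl

variable (V : Submodule ℝ C(E, ℝ))

lemma mem_of_approx (hV : IsClosed (V : Set C(E, ℝ))) {F : C(E, ℝ)}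
    (h : ∀ K : Set E, IsCompact K → ∀ ε : ℝ, 0 < ε →
      ∃ G ∈ V, ∀ x ∈ K, |F x - G x| ≤ ε) : F ∈ V := by
  have := memClosure_of_approx h
  rwa [hV.closure_eq] at this

lemma inner_bound (a : E) (K : Set E) (hK : IsCompact K) :
    ∃ C : ℝ, 1 ≤ C ∧ ∀ x ∈ K, |(inner ℝ a x : ℝ)| ≤ C := by
  obtain ⟨r, hr⟩ := (hK.image (show Continuous fun x : E => (inner ℝ a x : ℝ) from continuous_const.inner continuous_id)).isBounded.subset_closedBall 0
  refine ⟨max r 1, le_max_right _ _, fun x hx => ?_⟩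
  have := hr (Set.mem_image_of_mem _ hx)
  rw [Metric.mem_closedBall, Real.dist_eq, sub_zero] at this
  exact le_trans this (le_max_left _ _)

end Main

noncomputable def smoothOnce (τ : ℝ → ℝ) (h : ℝ) : ℝ → ℝ := fun t => (∫ s in (t - h)..t, τ s) / h

lemma smoothOnce_hasDerivAt {τ : ℝ → ℝ} (hτ : Continuous τ) (h t : ℝ) :
    HasDerivAt (smoothOnce τ h) ((τ t - τ (t - h)) / h) t := by
  have hF : ∀ y : ℝ, HasDerivAt (fun x => ∫ s in (0:ℝ)..x, τ s) (τ y) y := fun y =>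
    intervalIntegral.integral_hasDerivAt_right (hτ.intervalIntegrable _ _)
      (hτ.stronglyMeasurableAtFilter _ _) hτ.continuousAt
  have heq : smoothOnce τ h = fun t => ((∫ s in (0:ℝ)..t, τ s) - ∫ s in (0:ℝ)..(t - h), τ s) / h := by
    funext t
    unfold smoothOnce
    rw [intervalIntegral.integral_interval_sub_left (hτ.intervalIntegrable _ _)
      (hτ.intervalIntegrable _ _)]
  rw [heq]
  have := (((hF t).sub ((hF (t - h)).comp t ((hasDerivAt_id t).sub_const h))).div_const h)
  simpa using this

lemma smoothOnce_contDiff {τ : ℝ → ℝ} (hτ : Continuous τ) {k : ℕ} (hk : ContDiff ℝ k τ)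
    (h : ℝ) : ContDiff ℝ (k + 1 : ℕ) (smoothOnce τ h) := by
  have hdiff : Differentiable ℝ (smoothOnce τ h) :=
    fun t => (smoothOnce_hasDerivAt hτ h t).differentiableAt
  have hderiv : deriv (smoothOnce τ h) = fun t => (τ t - τ (t - h)) / h :=
    funext fun t => (smoothOnce_hasDerivAt hτ h t).deriv
  have : ContDiff ℝ ((k : WithTop ℕ∞) + 1) (smoothOnce τ h) := by
    refine (contDiff_succ_iff_deriv).mpr ⟨hdiff, by simp, ?_⟩
    rw [hderiv]
    exact (hk.sub (hk.comp (contDiff_id.sub contDiff_const))).div_const _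
  exact_mod_cast this

lemma smoothOnce_continuous {τ : ℝ → ℝ} (hτ : Continuous τ) (h : ℝ) :
    Continuous (smoothOnce τ h) :=
  Differentiable.continuous (fun t => (smoothOnce_hasDerivAt hτ h t).differentiableAt)

section Riemann
variable {E : Type*} [NormedAddCommGroup E] [InnerProductSpace ℝ E]
variable (V : Submodule ℝ C(E, ℝ))

lemma ridge_smoothOnce_mem (hVc : IsClosed (V : Set C(E, ℝ))) {τ : ℝ → ℝ} (hτ : Continuous τ)
    (hmem : ∀ a b, ridgeCM τ hτ a b ∈ V) {h : ℝ} (hh : 0 < h)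
    (hc : Continuous (smoothOnce τ h)) (a : E) (b : ℝ) :
    ridgeCM (smoothOnce τ h) hc a b ∈ V := by
  refine mem_of_approx V hVc fun K hK ε hε => ?_
  obtain ⟨C, hC1, hCb⟩ := inner_bound a K hK
  set J : Set ℝ := Set.Icc (-(C + |b| + h)) (C + |b| + h) with hJdef
  obtain ⟨δ, hδ, hub⟩ := Metric.uniformContinuousOn_iff_le.1
    ((isCompact_Icc).uniformContinuousOn_of_continuous hτ.continuousOn (s := J)) ε hε
  set m : ℕ := max 1 ⌈h / δ⌉₊ with hmdef
  have hm0 : 0 < (m : ℝ) := by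
    have : 1 ≤ m := le_max_left _ _
    exact_mod_cast Nat.lt_of_lt_of_le Nat.zero_lt_one this
  have hmδ : h / m ≤ δ := by
    have h1 : h / δ ≤ (⌈h / δ⌉₊ : ℝ) := Nat.le_ceil _
    have h2 : ((⌈h / δ⌉₊ : ℕ) : ℝ) ≤ (m : ℝ) := by
      exact_mod_cast Nat.cast_le.mpr (le_max_right 1 _)
    rw [div_le_iff₀ hm0]
    rw [div_le_iff₀ hδ] at h1
    calc h ≤ (⌈h / δ⌉₊ : ℝ) * δ := h1
      _ ≤ (m : ℝ) * δ := by nlinarith [hδ.le]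
      _ = δ * m := mul_comm _ _
  set g : ℕ → ℝ := fun i => i * (h / m) with hgdef
  have hg0 : g 0 = 0 := by simp [hgdef]
  have hgm : g m = h := by
    rw [hgdef]
    field_simp
  have hgmono : ∀ i j : ℕ, i ≤ j → g i ≤ g j := by
    intro i j hij
    have : (i : ℝ) ≤ j := by exact_mod_cast hij
    have hpos : 0 ≤ h / m := by positivity
    exact mul_le_mul_of_nonneg_right this hpos
  have hstep : ∀ i : ℕ, g (i + 1) - g i = h / m := by
    intro i
    rw [hgdef]
    push_cast
    ring
  refine ⟨((m : ℝ))⁻¹ • ∑ i ∈ Finset.range m, ridgeCM τ hτ a (b - g i),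
    Submodule.smul_mem _ _ (Submodule.sum_mem _ fun i _ => hmem a _), fun x hx => ?_⟩
  set u : ℝ := (inner ℝ a x : ℝ) + b with hudef
  have hu : |u| ≤ C + |b| := by
    calc |u| ≤ |(inner ℝ a x : ℝ)| + |b| := abs_add_le _ _
      _ ≤ C + |b| := by linarith [hCb x hx]
  have hmemJ : ∀ y : ℝ, 0 ≤ y → y ≤ h → u - y ∈ J := by
    intro y h0 h1
    rw [hJdef]
    rw [Set.mem_Icc]
    rcases abs_le.1 hu with ⟨hl, hr⟩
    constructor <;> linarith
  -- LHS as integral over [0, h]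
  have hS : ridgeCM (smoothOnce τ h) hc a b x = (∫ y in (0:ℝ)..h, τ (u - y)) / h := by
    rw [ridgeCM_apply, ← hudef]
    unfold smoothOnce
    congr 1
    rw [intervalIntegral.integral_comp_sub_left τ u]
    simp
  have hint : ∀ c : ℝ, ∀ i j : ℝ, IntervalIntegrable (fun y => τ (c - y))
      MeasureTheory.volume i j := fun c i j =>
    (hτ.comp (continuous_const.sub continuous_id)).intervalIntegrable _ _
  have hsum : ∑ i ∈ Finset.range m, ∫ y in g i..g (i + 1), τ (u - y) =
      ∫ y in (0:ℝ)..h, τ (u - y) := by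
    have := intervalIntegral.sum_integral_adjacent_intervals (a := g) (n := m)
      (f := fun y => τ (u - y)) (μ := MeasureTheory.volume) (fun k _ => hint u _ _)
    rw [hg0, hgm] at this
    exact this
  have happly : ∀ i : ℕ, ridgeCM τ hτ a (b - g i) x = τ (u - g i) := by
    intro i
    rw [ridgeCM_apply]
    congr 1
    rw [hudef]; ring
  have hGx : (((m : ℝ))⁻¹ • ∑ i ∈ Finset.range m, ridgeCM τ hτ a (b - g i)) x =
      (∑ i ∈ Finset.range m, (h / m) * τ (u - g i)) / h := by
    rw [ContinuousMap.smul_apply, ContinuousMap.sum_apply, smul_eq_mul]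
    rw [Finset.sum_congr rfl (fun i _ => happly i), ← Finset.mul_sum]
    rw [eq_div_iff (ne_of_gt hh)]
    field_simp
  -- error bound for each subinterval
  have hterm : ∀ i ∈ Finset.range m,
      |(∫ y in g i..g (i + 1), τ (u - y)) - (h / m) * τ (u - g i)| ≤ ε * (h / m) := by
    intro i hi
    have him : (i : ℕ) < m := Finset.mem_range.1 hi
    have hgi0 : 0 ≤ g i := by
      rw [← hg0]; exact hgmono 0 i (Nat.zero_le _)
    have hgi1h : g (i + 1) ≤ h := by
      rw [← hgm]; exact hgmono (i + 1) m him
    have hconst : (h / m) * τ (u - g i) = ∫ _ in g i..g (i + 1), τ (u - g i) := by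
      rw [intervalIntegral.integral_const, smul_eq_mul, hstep i]
    rw [hconst, ← intervalIntegral.integral_sub (hint u _ _) intervalIntegrable_const]
    have hbd : ∀ y ∈ Set.uIoc (g i) (g (i + 1)), ‖τ (u - y) - τ (u - g i)‖ ≤ ε := by
      intro y hy
      have hle : g i ≤ g (i + 1) := hgmono i (i + 1) (Nat.le_succ _)
      rw [Set.uIoc_of_le hle] at hy
      have hy0 : 0 ≤ y := le_trans hgi0 hy.1.le
      have hyh : y ≤ h := le_trans hy.2 hgi1h
      have h1 : u - y ∈ J := hmemJ y hy0 hyh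
      have h2 : u - g i ∈ J := hmemJ (g i) hgi0 (le_trans (hgmono i (i+1) (Nat.le_succ _)) hgi1h)
      have hdist : dist (u - y) (u - g i) ≤ δ := by
        rw [Real.dist_eq]
        have : |u - y - (u - g i)| = y - g i := by
          rw [show u - y - (u - g i) = -(y - g i) by ring, abs_neg, abs_of_nonneg (by linarith [hy.1.le])]
        rw [this]
        have := hstep i
        have : y - g i ≤ h / m := by linarith [hy.2, hstep i]
        linarith [hmδ]
      exact hub _ h1 _ h2 hdist
    calc ‖∫ y in g i..g (i + 1), (τ (u - y) - τ (u - g i))‖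
        ≤ ε * |g (i + 1) - g i| := intervalIntegral.norm_integral_le_of_norm_le_const hbd
      _ = ε * (h / m) := by rw [hstep i, abs_of_pos (by positivity)]
  -- assemble
  rw [hS, hGx, div_sub_div_same]
  rw [abs_div, abs_of_pos hh, div_le_iff₀ hh]
  rw [← hsum, ← Finset.sum_sub_distrib]
  calc |∑ i ∈ Finset.range m, ((∫ y in g i..g (i + 1), τ (u - y)) - (h / m) * τ (u - g i))|
      ≤ ∑ i ∈ Finset.range m, |(∫ y in g i..g (i + 1), τ (u - y)) - (h / m) * τ (u - g i)| :=
        Finset.abs_sum_le_sum_abs _ _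
    _ ≤ ∑ _i ∈ Finset.range m, ε * (h / m) := Finset.sum_le_sum hterm
    _ = ε * h := by
        rw [Finset.sum_const, Finset.card_range, nsmul_eq_mul]
        field_simp

end Riemann

lemma continuous_fwdDiff_iter {f : ℝ → ℝ} (hf : Continuous f) (s : ℝ) :
    ∀ k : ℕ, Continuous ((Δ_[s])^[k] f) := by
  intro k
  induction k with
  | zero => simpa using hf
  | succ k ih =>
    rw [Function.iterate_succ_apply']
    exact ((ih.comp (continuous_id.add continuous_const)).sub ih)

lemma abs_le_of_mem_uIoc {u s : ℝ} (hu : u ∈ Set.uIoc 0 s) : |u| ≤ |s| := by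
  rcases le_total 0 s with h | h
  · rw [Set.uIoc_of_le h] at hu
    rw [abs_of_pos hu.1, abs_of_nonneg h]; exact hu.2
  · rw [Set.uIoc_of_ge h] at hu
    rw [abs_of_nonpos hu.2, abs_of_nonpos h]
    linarith [hu.1]

lemma fwdDiff_iter_integral {f : ℝ → ℝ} (hf : Differentiable ℝ f)
    (hf' : Continuous (deriv f)) (s : ℝ) :
    ∀ (k : ℕ) (t : ℝ), ((Δ_[s])^[k + 1] f) t = ∫ u in (0:ℝ)..s, ((Δ_[s])^[k] (deriv f)) (t + u) := by
  intro k
  induction k with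
  | zero =>
    intro t
    have h1 : ∫ u in (0:ℝ)..s, deriv f (t + u) = ∫ u in (t+(0:ℝ))..(t+s), deriv f u :=
      intervalIntegral.integral_comp_add_left (deriv f) t
    show f (t + s) - f t = _
    simp only [Function.iterate_zero, id]
    rw [h1]
    rw [intervalIntegral.integral_deriv_eq_sub (fun x _ => hf x) (hf'.intervalIntegrable _ _)]
    simp [add_comm]
  | succ k ih =>
    intro t
    rw [Function.iterate_succ_apply' Δ_[s] (k+1) f]
    show (Δ_[s])^[k+1] f (t + s) - (Δ_[s])^[k+1] f t = _
    rw [ih (t + s), ih t]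
    have hc : ∀ c : ℝ, IntervalIntegrable (fun u => ((Δ_[s])^[k] (deriv f)) (c + u))
        MeasureTheory.volume 0 s := fun c =>
      ((continuous_fwdDiff_iter hf' s k).comp (continuous_const.add continuous_id)).intervalIntegrable _ _
    rw [← intervalIntegral.integral_sub (hc (t+s)) (hc t)]
    refine intervalIntegral.integral_congr fun u _ => ?_
    rw [Function.iterate_succ_apply' Δ_[s] k (deriv f)]
    show _ = (Δ_[s])^[k] (deriv f) (t + u + s) - (Δ_[s])^[k] (deriv f) (t + u)
    ring_nf

lemma fd_approx : ∀ (k : ℕ) (τ : ℝ → ℝ), ContDiff ℝ k τ → ∀ (b : ℝ) {ε : ℝ}, 0 < ε →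
    ∃ δ > 0, ∀ s t : ℝ, |s| ≤ δ → |t - b| ≤ δ →
      |((Δ_[s])^[k] τ) t - s ^ k * iteratedDeriv k τ b| ≤ ε * |s| ^ k := by
  intro k
  induction k with
  | zero =>
    intro τ hτ b ε hε
    rcases Metric.continuousAt_iff.1 (hτ.continuous.continuousAt (x := b)) ε hε with ⟨δ, hδ, hd⟩
    refine ⟨δ / 2, by linarith, fun s t _ ht => ?_⟩
    simp only [Function.iterate_zero, id, pow_zero, one_mul, mul_one]
    have := hd (show dist t b < δ by rw [Real.dist_eq]; linarith)
    rw [Real.dist_eq] at this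
    simpa [iteratedDeriv_zero] using this.le
  | succ k ih =>
    intro τ hτ b ε hε
    have hsucc := (contDiff_succ_iff_deriv (n := (k : WithTop ℕ∞))).mp (by exact_mod_cast hτ)
    have hd : Differentiable ℝ τ := hsucc.1
    have hτ' : ContDiff ℝ k (deriv τ) := hsucc.2.2
    rcases ih (deriv τ) hτ' b hε with ⟨δ', hδ', H⟩
    refine ⟨δ' / 2, by linarith, fun s t hs ht => ?_⟩
    have hD : iteratedDeriv (k+1) τ b = iteratedDeriv k (deriv τ) b := by
      rw [iteratedDeriv_succ']
    rw [fwdDiff_iter_integral hd hτ'.continuous s k t, hD]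
    have hconst : s ^ (k+1) * iteratedDeriv k (deriv τ) b =
        ∫ _ in (0:ℝ)..s, s ^ k * iteratedDeriv k (deriv τ) b := by
      rw [intervalIntegral.integral_const, smul_eq_mul]
      ring
    rw [hconst]
    have hc : IntervalIntegrable (fun u => ((Δ_[s])^[k] (deriv τ)) (t + u))
        MeasureTheory.volume 0 s :=
      ((continuous_fwdDiff_iter hτ'.continuous s k).comp
        (continuous_const.add continuous_id)).intervalIntegrable _ _
    rw [← intervalIntegral.integral_sub hc (intervalIntegrable_const)]
    have hbound : ∀ u ∈ Set.uIoc (0:ℝ) s,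
        ‖((Δ_[s])^[k] (deriv τ)) (t + u) - s ^ k * iteratedDeriv k (deriv τ) b‖ ≤ ε * |s| ^ k := by
      intro u hu
      have hus : |u| ≤ |s| := abs_le_of_mem_uIoc hu
      have h1 : |s| ≤ δ' := le_trans hs (by linarith)
      have h2 : |t + u - b| ≤ δ' := by
        have := abs_add_le (t - b) u
        have : |t + u - b| ≤ |t - b| + |u| := by
          calc |t + u - b| = |(t - b) + u| := by ring_nf
          _ ≤ |t - b| + |u| := abs_add_le _ _
        linarith
      exact H s (t + u) h1 h2
    calc ‖∫ u in (0:ℝ)..s, (((Δ_[s])^[k] (deriv τ)) (t + u) - s ^ k * iteratedDeriv k (deriv τ) b)‖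
        ≤ (ε * |s| ^ k) * |s - 0| := intervalIntegral.norm_integral_le_of_norm_le_const hbound
      _ = ε * |s| ^ (k+1) := by rw [sub_zero]; ring

/-- A pointwise filter limit of polynomials of degree < m+1 is a polynomial of degree < m+1. -/
lemma poly_pointwise_limit {ι : Type*} {l : Filter ι} [l.NeBot] (m : ℕ) (p : ι → Polynomial ℝ)
    (hdeg : ∀ i, (p i).degree < (m + 1 : ℕ)) (g : ℝ → ℝ)
    (hlim : ∀ t, Tendsto (fun i => (p i).eval t) l (𝓝 (g t))) :
    ∃ q : Polynomial ℝ, q.degree < (m + 1 : ℕ) ∧ ∀ t, g t = q.eval t := by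
  classical
  set s : Finset ℝ := (Finset.range (m + 1)).image (Nat.cast) with hs
  have hcard : s.card = m + 1 := by
    rw [hs, Finset.card_image_of_injective _ Nat.cast_injective, Finset.card_range]
  have hinj : Set.InjOn (id : ℝ → ℝ) s := Function.injective_id.injOn
  refine ⟨Lagrange.interpolate s id g, ?_, fun t => ?_⟩
  · simpa [hcard] using Lagrange.degree_interpolate_lt (v := (id : ℝ → ℝ)) g hinj
  · -- each p i equals its interpolation, pass to the limit
    have hrepr : ∀ i, (p i).eval t =
        ∑ r ∈ s, (p i).eval r * (Lagrange.basis s id r).eval t := by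
      intro i
      have h1 : p i = Lagrange.interpolate s id (fun r => (p i).eval (id r)) :=
        Lagrange.eq_interpolate hinj (by simpa [hcard] using hdeg i)
      conv_lhs => rw [h1]
      rw [Lagrange.interpolate_apply, Polynomial.eval_finset_sum]
      simp
    have h2 : Tendsto (fun i => (p i).eval t) l
        (𝓝 (∑ r ∈ s, g r * (Lagrange.basis s id r).eval t)) := by
      rw [funext hrepr]
      exact tendsto_finset_sum _ fun r _ => (hlim r).mul tendsto_const_nhds
    have h3 := tendsto_nhds_unique (hlim t) h2
    rw [h3, Lagrange.interpolate_apply, Polynomial.eval_finset_sum]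
    simp

lemma poly_of_integrals_poly (τ : ℝ → ℝ) (hτ : Continuous τ)
    (hint : ∀ h : ℝ, 0 < h → ∃ p : Polynomial ℝ, ∀ t, (∫ s in (t - h)..t, τ s) = p.eval t) :
    ∃ p : Polynomial ℝ, ∀ t, τ t = p.eval t := by
  classical
  set F : ℝ → ℝ := fun x => ∫ s in (0:ℝ)..x, τ s with hFdef
  have hF : ∀ y, HasDerivAt F (τ y) y := fun y =>
    intervalIntegral.integral_hasDerivAt_right (hτ.intervalIntegrable _ _)
      (hτ.stronglyMeasurableAtFilter _ _) hτ.continuousAt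
  have hFc : Continuous F := (by fun_prop)
  have hdiff : ∀ h t : ℝ, F t - F (t - h) = ∫ s in (t - h)..t, τ s := by
    intro h t
    rw [hFdef]
    rw [intervalIntegral.integral_interval_sub_left (hτ.intervalIntegrable _ _)
      (hτ.intervalIntegrable _ _)]
  set E : ℕ → Set ℝ := fun m =>
    {h | ∃ p : Polynomial ℝ, p.degree < ((m : ℕ) + 1 : ℕ) ∧ ∀ t, F t - F (t - h) = p.eval t}
    with hEdef
  have hdeg' : ∀ p : Polynomial ℝ, p.degree < ((p.natDegree : ℕ) + 1 : ℕ) :=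
    fun p => lt_of_le_of_lt p.degree_le_natDegree (by exact_mod_cast Nat.lt_succ_self _)
  have hcover : ⋃ m, E m = Set.univ := by
    refine Set.eq_univ_of_forall fun h => Set.mem_iUnion.2 ?_
    rcases lt_trichotomy h 0 with hneg | h0 | hpos
    · rcases hint (-h) (by linarith) with ⟨p, hp⟩
      refine ⟨p.natDegree, -(p.comp (X - C h)), ?_, fun t => ?_⟩
      · refine lt_of_le_of_lt (degree_le_natDegree) ?_
        rw [natDegree_neg, natDegree_comp, natDegree_X_sub_C, mul_one]
        exact_mod_cast Nat.lt_succ_self _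
      · have h1 := hp (t - h)
        rw [← hdiff (-h) (t - h)] at h1
        have h3 : t - h - -h = t := by ring
        rw [h3] at h1
        simp only [eval_neg, eval_comp, eval_sub, eval_X, eval_C]
        linarith [h1]
    · exact ⟨0, 0, by rw [degree_zero]; exact bot_lt_iff_ne_bot.mpr (by simp),
        fun t => by simp [h0]⟩
    · rcases hint h hpos with ⟨p, hp⟩
      exact ⟨p.natDegree, p, hdeg' p, fun t => by rw [hdiff, hp]⟩
  have hclosed : ∀ m, IsClosed (E m) := by
    intro m
    refine IsSeqClosed.isClosed ?_
    intro f h hfE hfh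
    choose p hpdeg hpeval using hfE
    have hlim : ∀ t, Tendsto (fun j => (p j).eval t) atTop (𝓝 (F t - F (t - h))) := by
      intro t
      have : Tendsto (fun j => F t - F (t - f j)) atTop (𝓝 (F t - F (t - h))) :=
        tendsto_const_nhds.sub ((hFc.tendsto _).comp (tendsto_const_nhds.sub hfh))
      exact this.congr fun j => (hpeval j t)
    exact poly_pointwise_limit m p hpdeg _ hlim
  obtain ⟨m, x0, hx0⟩ := nonempty_interior_of_iUnion_of_closed hclosed hcover
  obtain ⟨δ, hδ, hball⟩ := Metric.mem_nhds_iff.1 (mem_interior_iff_mem_nhds.1 hx0)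
  set P : ℝ → Polynomial ℝ := fun h =>
    if hh : ∃ p : Polynomial ℝ, p.degree < ((m : ℕ) + 1 : ℕ) ∧ ∀ t, F t - F (t - h) = p.eval t
    then hh.choose else 0 with hPdef
  have hPdeg : ∀ h, (P h).degree < ((m : ℕ) + 1 : ℕ) := by
    intro h
    by_cases hh : ∃ p : Polynomial ℝ, p.degree < ((m : ℕ) + 1 : ℕ) ∧
        ∀ t, F t - F (t - h) = p.eval t
    · simp only [hPdef]
      rw [dif_pos hh]
      exact hh.choose_spec.1
    · simp only [hPdef]
      rw [dif_neg hh, degree_zero]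
      exact bot_lt_iff_ne_bot.mpr (by simp)
  have hPeval : ∀ h ∈ Metric.ball x0 δ, ∀ t, F t - F (t - h) = (P h).eval t := by
    intro h hh t
    have hmem : ∃ p : Polynomial ℝ, p.degree < ((m : ℕ) + 1 : ℕ) ∧
        ∀ t, F t - F (t - h) = p.eval t := by simpa [hEdef] using hball hh
    simp only [hPdef]
    rw [dif_pos hmem]
    exact hmem.choose_spec.2 t
  set r : ℝ → Polynomial ℝ := fun h => C ((h - x0)⁻¹) * (P h - P x0) with hrdef
  have hrdeg : ∀ h, (r h).degree < ((m : ℕ) + 1 : ℕ) := by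
    intro h
    have h1 : (r h).degree ≤ (P h - P x0).degree := by
      refine le_trans (degree_mul_le _ _) ?_
      calc (C ((h - x0)⁻¹)).degree + (P h - P x0).degree
          ≤ 0 + (P h - P x0).degree := add_le_add degree_C_le le_rfl
        _ = (P h - P x0).degree := zero_add _
    exact lt_of_le_of_lt h1 (lt_of_le_of_lt (degree_sub_le _ _) (max_lt (hPdeg h) (hPdeg x0)))
  have hx0ball : x0 ∈ Metric.ball x0 δ := Metric.mem_ball_self hδ
  have hlim : ∀ t, Tendsto (fun h => (r h).eval t) (𝓝[≠] x0) (𝓝 (τ (t - x0))) := by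
    intro t
    have hslope : HasDerivAt (fun h => -F (t - h)) (τ (t - x0)) x0 := by
      have hin : HasDerivAt (fun h : ℝ => t - h) (-1) x0 := (hasDerivAt_id x0).const_sub t
      have := ((hF (t - x0)).comp x0 hin).neg
      exact this.congr_deriv (by ring)
    have htend := hasDerivAt_iff_tendsto_slope.1 hslope
    refine htend.congr' ?_
    have hev : Metric.ball x0 δ ∩ {x0}ᶜ ∈ 𝓝[≠] x0 :=
      inter_mem (mem_nhdsWithin_of_mem_nhds (Metric.ball_mem_nhds x0 hδ)) self_mem_nhdsWithin
    filter_upwards [hev] with h hh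
    rcases hh with ⟨hb, hne⟩
    have hne' : h - x0 ≠ 0 := sub_ne_zero.2 hne
    rw [slope_def_field]
    rw [hrdef]
    simp only [eval_mul, eval_C, eval_sub]
    rw [← hPeval h hb t, ← hPeval x0 hx0ball t]
    field_simp
    ring
  obtain ⟨q, _, hq⟩ := poly_pointwise_limit m r hrdeg _ hlim
  refine ⟨q.comp (X + C x0), fun t => ?_⟩
  have := hq (t + x0)
  simp only [add_sub_cancel_right] at this
  rw [this, eval_comp]
  simp

/-- Every real polynomial has a polynomial antiderivative. -/
lemma exists_antideriv (q : Polynomial ℝ) : ∃ Q : Polynomial ℝ, Q.derivative = q := by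
  classical
  refine ⟨∑ i ∈ q.support, C (q.coeff i / (i + 1)) * X ^ (i + 1), ?_⟩
  rw [derivative_sum]
  conv_rhs => rw [q.as_sum_support]
  refine Finset.sum_congr rfl fun i _ => ?_
  rw [derivative_C_mul_X_pow]
  rw [← C_mul_X_pow_eq_monomial]
  congr 1
  push_cast
  field_simp

/-- If a `C^k` function has vanishing `k`-th derivative, it is a polynomial. -/
lemma poly_of_iteratedDeriv_zero : ∀ (k : ℕ) (f : ℝ → ℝ), ContDiff ℝ k f →
    (∀ t, iteratedDeriv k f t = 0) → ∃ p : Polynomial ℝ, ∀ t, f t = p.eval t := by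
  intro k
  induction k with
  | zero => intro f _ h; exact ⟨0, by simpa using h⟩
  | succ k ih =>
    intro f hf h
    have hf' : Differentiable ℝ f ∧ ContDiff ℝ k (deriv f) := by
      have := (contDiff_succ_iff_deriv (n := (k : WithTop ℕ∞))).mp (by exact_mod_cast hf)
      exact ⟨this.1, this.2.2⟩
    rcases ih (deriv f) hf'.2 (by simpa [iteratedDeriv_succ'] using h) with ⟨q, hq⟩
    rcases exists_antideriv q with ⟨Q, hQ⟩
    have hconst : ∀ t, f t - Q.eval t = f 0 - Q.eval 0 := by
      have hd : Differentiable ℝ (fun t => f t - Q.eval t) :=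
        hf'.1.sub (Polynomial.differentiable Q)
      intro t
      refine is_const_of_deriv_eq_zero hd (fun x => ?_) t 0
      rw [deriv_fun_sub (hf'.1 x) (Polynomial.differentiable Q x),
        Polynomial.deriv, hQ, hq x, sub_self]
    refine ⟨Q + C (f 0 - Q.eval 0), fun t => ?_⟩
    have := hconst t
    simp only [eval_add, eval_C]
    linarith
section Fd
open scoped fwdDiff
variable {E : Type*} [NormedAddCommGroup E] [InnerProductSpace ℝ E]
variable (V : Submodule ℝ C(E, ℝ))

lemma pow_deriv_mem (hVc : IsClosed (V : Set C(E, ℝ))) {τ : ℝ → ℝ} (hτ : Continuous τ)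
    {k : ℕ} (hk : ContDiff ℝ k τ) (hmem : ∀ a b, ridgeCM τ hτ a b ∈ V) (a : E) (b : ℝ) :
    powCM a k (iteratedDeriv k τ b) ∈ V := by
  refine mem_of_approx V hVc fun K hK ε hε => ?_
  obtain ⟨C, hC1, hCb⟩ := inner_bound a K hK
  have hC0 : 0 < C := lt_of_lt_of_le one_pos hC1
  have hεC : 0 < ε / C ^ k := by positivity
  obtain ⟨δ, hδ, H⟩ := fd_approx k τ hk b hεC
  set h : ℝ := δ / C with hhdef
  have hh : 0 < h := by positivity
  refine ⟨(h ^ k)⁻¹ • ∑ i ∈ Finset.range (k + 1),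
      (((-1 : ℝ) ^ (k - i) * (k.choose i : ℝ)) • ridgeCM τ hτ ((i * h) • a) b),
    Submodule.smul_mem _ _ (Submodule.sum_mem _ fun i _ => Submodule.smul_mem _ _ (hmem _ _)),
    fun x hx => ?_⟩
  set s : ℝ := h * inner ℝ a x with hsdef
  have hs : |s| ≤ δ := by
    rw [hsdef, abs_mul, abs_of_pos hh]
    calc h * |(inner ℝ a x : ℝ)| ≤ h * C := by
          have := hCb x hx
          nlinarith
      _ = δ := by rw [hhdef]; field_simp
  have hGx : ((h ^ k)⁻¹ • ∑ i ∈ Finset.range (k + 1),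
      (((-1 : ℝ) ^ (k - i) * (k.choose i : ℝ)) • ridgeCM τ hτ ((i * h) • a) b)) x =
      (h ^ k)⁻¹ * ((Δ_[s])^[k] τ b) := by
    rw [fwdDiff_iter_eq_sum_shift s τ k b]
    rw [ContinuousMap.smul_apply, ContinuousMap.sum_apply, smul_eq_mul]
    congr 1
    refine Finset.sum_congr rfl fun i _ => ?_
    rw [ContinuousMap.smul_apply, ridgeCM_apply, real_inner_smul_left]
    have harg : (i : ℝ) * h * (inner ℝ a x : ℝ) + b = b + i • s := by
      rw [nsmul_eq_mul, hsdef]; ring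
    rw [harg, smul_eq_mul, zsmul_eq_mul]
    push_cast
    ring
  rw [hGx, powCM_apply]
  have hfd := H s b hs (by simp [hδ.le])
  have hsk : s ^ k = h ^ k * (inner ℝ a x : ℝ) ^ k := by rw [hsdef, mul_pow]
  have hskabs : |s| ^ k ≤ h ^ k * C ^ k := by
    calc |s| ^ k ≤ (h * C) ^ k := by
          refine pow_le_pow_left₀ (abs_nonneg s) ?_ k
          rw [hsdef, abs_mul, abs_of_pos hh]
          nlinarith [hCb x hx, abs_nonneg (inner ℝ a x : ℝ)]
      _ = h ^ k * C ^ k := mul_pow h C k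
  have key : |(h ^ k)⁻¹ * ((Δ_[s])^[k] τ b) - (inner ℝ a x : ℝ) ^ k * iteratedDeriv k τ b|
      = (h ^ k)⁻¹ * |(Δ_[s])^[k] τ b - s ^ k * iteratedDeriv k τ b| := by
    have hpos : (0:ℝ) < (h ^ k)⁻¹ := by positivity
    conv_rhs => rw [← abs_of_pos hpos, ← abs_mul]
    congr 1
    have hhk : (h : ℝ) ^ k ≠ 0 := by positivity
    rw [hsk, mul_assoc, mul_sub, ← mul_assoc, inv_mul_cancel₀ hhk, one_mul]
  rw [abs_sub_comm, key]
  calc (h ^ k)⁻¹ * |(Δ_[s])^[k] τ b - s ^ k * iteratedDeriv k τ b|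
      ≤ (h ^ k)⁻¹ * (ε / C ^ k * (h ^ k * C ^ k)) := by
        refine mul_le_mul_of_nonneg_left (le_trans hfd ?_) (by positivity)
        exact mul_le_mul_of_nonneg_left hskabs (le_of_lt hεC)
    _ = ε := by field_simp
end Fd
section Chain
open Polynomial
variable {E : Type*} [NormedAddCommGroup E] [InnerProductSpace ℝ E]
variable (V : Submodule ℝ C(E, ℝ))

lemma exists_smooth_ridge (hVc : IsClosed (V : Set C(E, ℝ))) {σ : ℝ → ℝ} (hσ : Continuous σ)
    (hmem : ∀ a b, ridgeCM σ hσ a b ∈ V)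
    (hnp : ¬ ∃ p : Polynomial ℝ, ∀ t, σ t = p.eval t) (k : ℕ) :
    ∃ (τ : ℝ → ℝ) (hc : Continuous τ), ContDiff ℝ k τ ∧ (∀ a b, ridgeCM τ hc a b ∈ V) ∧
      ¬ ∃ p : Polynomial ℝ, ∀ t, τ t = p.eval t := by
  induction k with
  | zero => exact ⟨σ, hσ, contDiff_zero.mpr hσ, hmem, hnp⟩
  | succ k ih =>
    obtain ⟨τ, hc, hk, hmemτ, hnpτ⟩ := ih
    by_cases hpoly : ∀ h : ℝ, 0 < h → ∃ p : Polynomial ℝ, ∀ t, smoothOnce τ h t = p.eval t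
    · exfalso
      refine hnpτ (poly_of_integrals_poly τ hc fun h hh => ?_)
      obtain ⟨p, hp⟩ := hpoly h hh
      refine ⟨C h * p, fun t => ?_⟩
      have h1 := hp t
      unfold smoothOnce at h1
      rw [eval_mul, eval_C, ← h1]
      field_simp
    · push_neg at hpoly
      obtain ⟨h, hh, hnp'⟩ := hpoly
      refine ⟨smoothOnce τ h, smoothOnce_continuous hc h, smoothOnce_contDiff hc hk h,
        ridge_smoothOnce_mem V hVc hc hmemτ hh _, ?_⟩
      rintro ⟨p, hp⟩
      obtain ⟨t, ht⟩ := hnp' p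
      exact ht (hp t)

lemma powRidge_mem (hVc : IsClosed (V : Set C(E, ℝ))) {σ : ℝ → ℝ} (hσ : Continuous σ)
    (hmem : ∀ a b, ridgeCM σ hσ a b ∈ V)
    (hnp : ¬ ∃ p : Polynomial ℝ, ∀ t, σ t = p.eval t) (k : ℕ) (a : E) :
    powCM a k 1 ∈ V := by
  obtain ⟨τ, hc, hk, hmemτ, hnpτ⟩ := exists_smooth_ridge V hVc hσ hmem hnp k
  have hex : ∃ b, iteratedDeriv k τ b ≠ 0 := by
    by_contra hz
    push_neg at hz
    exact hnpτ (poly_of_iteratedDeriv_zero k τ hk hz)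
  obtain ⟨b, hb⟩ := hex
  have h1 := pow_deriv_mem V hVc hc hk hmemτ a b
  have h2 : powCM a k 1 = (iteratedDeriv k τ b)⁻¹ • powCM a k (iteratedDeriv k τ b) := by
    ext x
    rw [ContinuousMap.smul_apply, powCM_apply, powCM_apply, smul_eq_mul]
    field_simp
  rw [h2]
  exact Submodule.smul_mem _ _ h1

lemma exists_poly_approx (g : ℝ → ℝ) (hg : Continuous g) (R ε : ℝ) (hε : 0 < ε) :
    ∃ p : Polynomial ℝ, ∀ t ∈ Set.Icc (-R) R, |g t - p.eval t| ≤ ε := by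
  have htop := polynomialFunctions_closure_eq_top (-R) R
  set I : Set ℝ := Set.Icc (-R) R with hIdef
  set gI : C(I, ℝ) := ⟨fun t => g t, hg.comp continuous_subtype_val⟩ with hgIdef
  have hmem : gI ∈ closure ((polynomialFunctions I : Set C(I, ℝ))) := by
    have : gI ∈ (polynomialFunctions I).topologicalClosure := by
      rw [htop]; trivial
    exact this
  obtain ⟨q, hq, hdq⟩ := Metric.mem_closure_iff.1 hmem ε hε
  obtain ⟨p, -, hpq⟩ := Subalgebra.mem_map.1 hq
  refine ⟨p, fun t ht => ?_⟩
  have h1 : dist (gI ⟨t, ht⟩) (q ⟨t, ht⟩) ≤ dist gI q := ContinuousMap.dist_apply_le_dist _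
  have h2 : q ⟨t, ht⟩ = p.eval t := by
    rw [← hpq]
    rfl
  rw [hgIdef] at h1
  simp only [ContinuousMap.coe_mk] at h1
  rw [h2] at h1
  calc |g t - p.eval t| = dist (g t) (p.eval t) := (Real.dist_eq _ _).symm
    _ ≤ dist gI q := h1
    _ ≤ ε := hdq.le

lemma exp_mem (hVc : IsClosed (V : Set C(E, ℝ))) {σ : ℝ → ℝ} (hσ : Continuous σ)
    (hmem : ∀ a b, ridgeCM σ hσ a b ∈ V)
    (hnp : ¬ ∃ p : Polynomial ℝ, ∀ t, σ t = p.eval t) (a : E) :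
    expCM a ∈ V := by
  refine mem_of_approx V hVc fun K hK ε hε => ?_
  obtain ⟨C, hC1, hCb⟩ := inner_bound a K hK
  obtain ⟨p, hp⟩ := exists_poly_approx Real.exp Real.continuous_exp C ε hε
  refine ⟨∑ i ∈ p.support, p.coeff i • powCM a i 1,
    Submodule.sum_mem _ fun i _ => Submodule.smul_mem _ _ (powRidge_mem V hVc hσ hmem hnp i a),
    fun x hx => ?_⟩
  have hval : (∑ i ∈ p.support, p.coeff i • powCM a i 1) x = p.eval ((inner ℝ a x : ℝ)) := by
    rw [ContinuousMap.sum_apply, Polynomial.eval_eq_sum, Polynomial.sum_def]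
    refine Finset.sum_congr rfl fun i _ => ?_
    rw [ContinuousMap.smul_apply, powCM_apply, smul_eq_mul, mul_one]
  rw [expCM_apply, hval]
  exact hp _ (Set.mem_Icc.2 ⟨(abs_le.1 (hCb x hx)).1, (abs_le.1 (hCb x hx)).2⟩)

end Chain
section Final
open Polynomial
variable {E : Type*} [NormedAddCommGroup E] [InnerProductSpace ℝ E]

noncomputable def restrictLM (K : Set E) : C(E, ℝ) →ₗ[ℝ] C(K, ℝ) where
  toFun f := f.restrict K
  map_add' f g := rfl
  map_smul' c f := rfl

lemma all_mem (V : Submodule ℝ C(E, ℝ)) (hVc : IsClosed (V : Set C(E, ℝ)))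
    {σ : ℝ → ℝ} (hσ : Continuous σ) (hmem : ∀ a b, ridgeCM σ hσ a b ∈ V)
    (hnp : ¬ ∃ p : Polynomial ℝ, ∀ t, σ t = p.eval t) (F : C(E, ℝ)) : F ∈ V := by
  refine mem_of_approx V hVc fun K hK ε hε => ?_
  haveI : CompactSpace K := isCompact_iff_compactSpace.mp hK
  -- the submonoid of restricted exponentials
  set T' : Submonoid C(K, ℝ) :=
    { carrier := Set.range fun a : E => (expCM a).restrict K
      one_mem' := ⟨0, by ext x; simp⟩
      mul_mem' := by
        rintro f g ⟨a, rfl⟩ ⟨c, rfl⟩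
        refine ⟨a + c, ?_⟩
        ext x
        simp [inner_add_left, Real.exp_add] } with hT'def
  set A : Subalgebra ℝ C(K, ℝ) := Algebra.adjoin ℝ (T' : Set C(K, ℝ)) with hAdef
  have hAspan : (A : Set C(K, ℝ)) =
      (Submodule.span ℝ (T' : Set C(K, ℝ)) : Set C(K, ℝ)) := by
    have h1 := Algebra.adjoin_eq_span ℝ (T' : Set C(K, ℝ))
    rw [Submonoid.closure_eq] at h1
    calc (A : Set C(K, ℝ))
        = ((Subalgebra.toSubmodule A : Submodule ℝ C(K, ℝ)) : Set C(K, ℝ)) := by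
          rw [Subalgebra.coe_toSubmodule]
      _ = _ := by rw [hAdef, h1]
  have hsep : A.SeparatesPoints := by
    intro x y hxy
    have hne : (x : E) - (y : E) ≠ 0 := sub_ne_zero.2 (fun h => hxy (Subtype.ext h))
    refine ⟨_, ⟨(expCM ((x : E) - (y : E))).restrict K,
      Algebra.subset_adjoin ⟨(x : E) - (y : E), rfl⟩, rfl⟩, ?_⟩
    simp only [ContinuousMap.restrict_apply, expCM_apply]
    intro hcontra
    have h2 := Real.exp_injective hcontra
    have h3 : (inner ℝ ((x:E) - (y:E)) ((x:E) - (y:E)) : ℝ) = 0 := by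
      rw [inner_sub_right]
      linarith
    exact hne ((inner_self_eq_zero (𝕜 := ℝ)).1 h3)
  have htop := ContinuousMap.subalgebra_topologicalClosure_eq_top_of_separatesPoints A hsep
  have hFmem : F.restrict K ∈ closure (A : Set C(K, ℝ)) := by
    have : F.restrict K ∈ A.topologicalClosure := by rw [htop]; trivial
    exact this
  rw [hAspan] at hFmem
  obtain ⟨g, hg, hdist⟩ := Metric.mem_closure_iff.1 hFmem ε hε
  -- pull back g to an element of V
  have hT'img : (T' : Set C(K, ℝ)) = (restrictLM K) '' (Set.range (expCM : E → C(E, ℝ))) := by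
    rw [hT'def]
    ext f
    constructor
    · rintro ⟨a, rfl⟩; exact ⟨expCM a, ⟨a, rfl⟩, rfl⟩
    · rintro ⟨G, ⟨a, rfl⟩, rfl⟩; exact ⟨a, rfl⟩
  rw [hT'img, Submodule.span_image] at hg
  obtain ⟨G0, hG0, hG0g⟩ := Submodule.mem_map.1 hg
  have hG0V : G0 ∈ V := by
    have hle : Submodule.span ℝ (Set.range (expCM : E → C(E, ℝ))) ≤ V :=
      Submodule.span_le.2 (by rintro _ ⟨a, rfl⟩; exact exp_mem V hVc hσ hmem hnp a)
    exact hle hG0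
  refine ⟨G0, hG0V, fun x hx => ?_⟩
  have h1 : dist (F.restrict K ⟨x, hx⟩) (g ⟨x, hx⟩) ≤ dist (F.restrict K) g :=
    ContinuousMap.dist_apply_le_dist _
  have h2 : g ⟨x, hx⟩ = G0 x := by rw [← hG0g]; rfl
  simp only [ContinuousMap.restrict_apply] at h1
  rw [h2, Real.dist_eq] at h1
  exact le_trans h1 hdist.le

end Final
section Easy
open Polynomial
variable {E : Type*} [NormedAddCommGroup E] [InnerProductSpace ℝ E]

noncomputable def monCM (j : ℕ) : C(ℝ, ℝ) := ⟨fun t => t ^ j, continuous_pow j⟩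

lemma not_dense_of_poly (e0 : E) (he0 : (inner ℝ e0 e0 : ℝ) = 1)
    {σ : ℝ → ℝ} (p : Polynomial ℝ) (hp : ∀ t, σ t = p.eval t) :
    ¬ Dense ((Submodule.span ℝ
      {F : C(E, ℝ) | ∃ a b, ∀ x, F x = σ ((inner ℝ a x : ℝ) + b)}) : Set C(E, ℝ)) := by
  classical
  set m := p.natDegree with hm
  set ℓ : C(ℝ, E) := ⟨fun t => t • e0, continuous_id.smul continuous_const⟩ with hldef
  set L : C(E, ℝ) →ₗ[ℝ] C(ℝ, ℝ) :=
    { toFun := fun F => F.comp ℓ, map_add' := fun f g => rfl, map_smul' := fun c f => rfl }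
    with hLdef
  set Pm : Submodule ℝ C(ℝ, ℝ) :=
    Submodule.span ℝ (Set.range fun j : Fin (m + 1) => monCM (j : ℕ)) with hPmdef
  haveI : FiniteDimensional ℝ Pm := FiniteDimensional.span_of_finite ℝ (Set.finite_range _)
  have hPmclosed : IsClosed (Pm : Set C(ℝ, ℝ)) := Submodule.closed_of_finiteDimensional _
  have hpoly_in : ∀ q : Polynomial ℝ, q.natDegree ≤ m → ∀ G : C(ℝ, ℝ),
      (∀ t, G t = q.eval t) → G ∈ Pm := by
    intro q hq G hG
    have hGsum : G = ∑ j : Fin (m + 1), q.coeff (j : ℕ) • monCM (j : ℕ) := by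
      ext t
      calc G t = ∑ i ∈ Finset.range (m + 1), q.coeff i * t ^ i := by
            rw [hG, eval_eq_sum_range' (Nat.lt_succ_of_le hq)]
        _ = ∑ j : Fin (m + 1), q.coeff (j : ℕ) * t ^ (j : ℕ) :=
            (Fin.sum_univ_eq_sum_range (fun i => q.coeff i * t ^ i) (m + 1)).symm
        _ = (∑ j : Fin (m + 1), q.coeff (j : ℕ) • monCM (j : ℕ)) t := by
            rw [ContinuousMap.sum_apply]
            refine Finset.sum_congr rfl fun j _ => ?_
            simp [monCM]
    rw [hGsum]
    exact Submodule.sum_mem _ fun j _ =>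
      Submodule.smul_mem _ _ (Submodule.subset_span ⟨j, rfl⟩)
  have hsub : Submodule.span ℝ
      {F : C(E, ℝ) | ∃ a b, ∀ x, F x = σ ((inner ℝ a x : ℝ) + b)} ≤ Submodule.comap L Pm := by
    rw [Submodule.span_le]
    rintro F ⟨a, b, hF⟩
    show L F ∈ Pm
    refine hpoly_in (p.comp (Polynomial.C ((inner ℝ a e0 : ℝ)) * X + Polynomial.C b)) ?_ (L F) ?_
    · refine le_trans natDegree_comp_le ?_
      have h1 : (Polynomial.C ((inner ℝ a e0 : ℝ)) * X + Polynomial.C b).natDegree ≤ 1 := by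
        refine le_trans (natDegree_add_le _ _) ?_
        refine max_le (le_trans (natDegree_C_mul_le _ _) (le_of_eq natDegree_X)) ?_
        rw [natDegree_C]
        exact Nat.zero_le 1
      exact le_trans (Nat.mul_le_mul_left _ h1) (le_of_eq (mul_one m))
    · intro t
      show F (ℓ t) = _
      have hℓt : ℓ t = t • e0 := rfl
      rw [hℓt, hF, hp]
      rw [eval_comp, eval_add, eval_mul, eval_C, eval_X, eval_C]
      congr 1
      rw [real_inner_smul_right]
      ring
  intro hdense
  have hWclosed : IsClosed ((Submodule.comap L Pm : Submodule ℝ C(E, ℝ)) : Set C(E, ℝ)) := by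
    have : ((Submodule.comap L Pm : Submodule ℝ C(E, ℝ)) : Set C(E, ℝ)) =
        (fun F : C(E, ℝ) => F.comp ℓ) ⁻¹' (Pm : Set C(ℝ, ℝ)) := rfl
    rw [this]
    exact hPmclosed.preimage (ContinuousMap.continuous_precomp ℓ)
  have hclosure : closure ((Submodule.span ℝ
      {F : C(E, ℝ) | ∃ a b, ∀ x, F x = σ ((inner ℝ a x : ℝ) + b)}) : Set C(E, ℝ)) ⊆
      ((Submodule.comap L Pm : Submodule ℝ C(E, ℝ)) : Set C(E, ℝ)) :=
    closure_minimal hsub hWclosed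
  set f : C(E, ℝ) := powCM e0 (m + 1) 1 with hfdef
  have hf : f ∈ Submodule.comap L Pm := hclosure (by rw [hdense.closure_eq]; trivial)
  have hfPm : L f ∈ Pm := hf
  have hLf : ∀ t : ℝ, (L f) t = t ^ (m + 1) := by
    intro t
    show powCM e0 (m + 1) 1 (t • e0) = _
    rw [powCM_apply, real_inner_smul_right, he0]
    ring
  have hrep : ∀ g ∈ Pm, ∃ q : Polynomial ℝ, q.natDegree ≤ m ∧ ∀ t : ℝ, g t = q.eval t := by
    intro g hg
    refine Submodule.span_induction ?_ ?_ ?_ ?_ hg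
    · rintro g' ⟨j, rfl⟩
      exact ⟨X ^ (j : ℕ), by rw [natDegree_X_pow]; exact Nat.lt_succ_iff.mp j.isLt,
        fun t => by simp [monCM]⟩
    · exact ⟨0, by simp, fun t => by simp⟩
    · rintro g1 g2 - - ⟨q1, hq1, he1⟩ ⟨q2, hq2, he2⟩
      exact ⟨q1 + q2, le_trans (natDegree_add_le _ _) (max_le hq1 hq2),
        fun t => by rw [ContinuousMap.add_apply, he1, he2, eval_add]⟩
    · rintro c g1 - ⟨q1, hq1, he1⟩
      exact ⟨Polynomial.C c * q1, le_trans (natDegree_C_mul_le _ _) hq1,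
        fun t => by rw [ContinuousMap.smul_apply, he1, eval_mul, eval_C, smul_eq_mul]⟩
  obtain ⟨q, hq, heq⟩ := hrep _ hfPm
  have hXq : (X : Polynomial ℝ) ^ (m + 1) = q := by
    refine Polynomial.funext fun t => ?_
    rw [eval_pow, eval_X, ← heq t, hLf t]
  have : m + 1 ≤ m := by
    calc m + 1 = ((X : Polynomial ℝ) ^ (m + 1)).natDegree := (natDegree_X_pow _).symm
      _ = q.natDegree := by rw [hXq]
      _ ≤ m := hq
  omega

end Easy

/-- The span of the ridge functions x ↦ σ(⟨a,x⟩ + b), a ∈ ℝⁿ, b ∈ ℝ, is dense in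
C(ℝⁿ) (uniform convergence on compacta) iff σ is not a polynomial. -/
theorem ridge_dense_iff_not_polynomial (n : ℕ) (hn : 1 ≤ n)
    (σ : ℝ → ℝ) (hσ : Continuous σ) :
    Dense (Submodule.span ℝ
        {F : C(EuclideanSpace ℝ (Fin n), ℝ) |
          ∃ (a : EuclideanSpace ℝ (Fin n)) (b : ℝ),
            ∀ x, F x = σ ((inner ℝ a x : ℝ) + b)} :
        Set C(EuclideanSpace ℝ (Fin n), ℝ)) ↔
      ¬ ∃ p : Polynomial ℝ, ∀ t : ℝ, σ t = p.eval t := by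
  constructor
  · intro hd
    rintro ⟨p, hp⟩
    have he0 : (inner ℝ (EuclideanSpace.single (⟨0, hn⟩ : Fin n) (1 : ℝ))
        (EuclideanSpace.single (⟨0, hn⟩ : Fin n) (1 : ℝ)) : ℝ) = 1 := by
      rw [real_inner_self_eq_norm_sq, EuclideanSpace.norm_single]
      norm_num
    exact not_dense_of_poly (EuclideanSpace.single (⟨0, hn⟩ : Fin n) (1 : ℝ)) he0 p hp hd
  · intro hnp
    set V := (Submodule.span ℝ
        {F : C(EuclideanSpace ℝ (Fin n), ℝ) |
          ∃ (a : EuclideanSpace ℝ (Fin n)) (b : ℝ),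
            ∀ x, F x = σ ((inner ℝ a x : ℝ) + b)}).topologicalClosure with hV
    have hmem : ∀ (a : EuclideanSpace ℝ (Fin n)) (b : ℝ), ridgeCM σ hσ a b ∈ V := fun a b =>
      Submodule.le_topologicalClosure _ (Submodule.subset_span ⟨a, b, fun x => rfl⟩)
    have hall : ∀ F, F ∈ V :=
      all_mem V (Submodule.isClosed_topologicalClosure _) hσ hmem hnp
    rw [dense_iff_closure_eq, ← Submodule.topologicalClosure_coe]
    exact Set.eq_univ_of_forall hall
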